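/- arXiv:2403.07318 — 2 statements merged into one kernel-verified Lean document; each statement's English description precedes it below -/
import Mathlib

section
/- Under the statistic setup, the statistic T_n is an unbiased estimator of the target quadratic form: E(T_n) = (Σ_{i=1}^q β_i μ_i)ᵀ W (Σ_{i=1}^q β_i μ_i). -/
open MeasureTheory ProbabilityTheory Matrix
open scoped BigOperators ProbabilityTheory

/-- under the statistic setup, `T_n` is an unbiased estimator of the target
quadratic form: `E(T_n) = (Σ βᵢ μᵢ)ᵀ W (Σ βᵢ μᵢ)`. -/
theorem stmt_2
    {Ω : Type} [MeasureSpace Ω] [IsProbabilityMeasure (ℙ : Measure Ω)]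
    (p q : ℕ) (hq : 2 ≤ q)
    (N : Fin q → ℕ) (hN : ∀ i, 2 ≤ N i)
    (x : (i : Fin q) → Fin (N i) → Ω → Fin p → ℝ)
    (hmeas : ∀ i j, Measurable (x i j))
    (hindep : ProbabilityTheory.iIndepFun
      (fun ij : (Σ i : Fin q, Fin (N i)) => x ij.1 ij.2) ℙ)
    (μv : Fin q → Fin p → ℝ)
    (Sig : Fin q → Matrix (Fin p) (Fin p) ℝ)
    (hL2 : ∀ i j, MemLp (x i j) 2 ℙ)
    (hmean : ∀ i j k, ∫ ω, x i j ω k = μv i k)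
    (hcov : ∀ i j k l, ∫ ω, (x i j ω k - μv i k) * (x i j ω l - μv i l) = Sig i k l)
    (β : Fin q → ℝ)
    (W : Matrix (Fin p) (Fin p) ℝ) (hW : W.IsSymm)
    (T1 T2 T : Ω → ℝ)
    (hT1 : ∀ ω, T1 ω = ∑ i1, ∑ i2, if i1 ≠ i2 then
        β i1 * β i2 / ((N i1 : ℝ) * (N i2 : ℝ)) *
          ∑ j1, ∑ j2, x i1 j1 ω ⬝ᵥ W.mulVec (x i2 j2 ω) else 0)
    (hT2 : ∀ ω, T2 ω = ∑ i, β i ^ 2 / ((N i : ℝ) * ((N i : ℝ) - 1)) *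
          ∑ j1, ∑ j2, if j1 ≠ j2 then x i j1 ω ⬝ᵥ W.mulVec (x i j2 ω) else 0)
    (hT : ∀ ω, T ω = T1 ω + T2 ω)
    :
    ∫ ω, T ω = (∑ i, β i • μv i) ⬝ᵥ W.mulVec (∑ i, β i • μv i) := by
  classical
  -- N i ≠ 0 facts
  have hN0 : ∀ i : Fin q, (N i : ℝ) ≠ 0 := fun i => by
    have := hN i; positivity
  have hN1 : ∀ i : Fin q, (N i : ℝ) - 1 ≠ 0 := fun i => by
    have h := hN i
    have : (2 : ℝ) ≤ (N i : ℝ) := by exact_mod_cast h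
    linarith
  -- components are in L2 hence integrable
  have hcomp : ∀ (i : Fin q) (j : Fin (N i)) (k : Fin p),
      MemLp (fun ω => x i j ω k) 2 ℙ := fun i j k =>
    (ContinuousLinearMap.proj (R := ℝ) (φ := fun _ : Fin p => ℝ) k).comp_memLp' (hL2 i j)
  have hint1 : ∀ (i : Fin q) (j : Fin (N i)) (k : Fin p),
      Integrable (fun ω => x i j ω k) ℙ := fun i j k =>
    (hcomp i j k).integrable one_le_two
  -- pairwise independence of components
  have hpair : ∀ (a b : Σ i : Fin q, Fin (N i)), a ≠ b → ∀ (k l : Fin p),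
      IndepFun (fun ω => x a.1 a.2 ω k) (fun ω => x b.1 b.2 ω l) ℙ := fun a b hab k l =>
    (hindep.indepFun hab).comp (measurable_pi_apply k) (measurable_pi_apply l)
  have hmul_int : ∀ (a b : Σ i : Fin q, Fin (N i)), a ≠ b → ∀ (k l : Fin p),
      Integrable (fun ω => x a.1 a.2 ω k * x b.1 b.2 ω l) ℙ := fun a b hab k l =>
    (hpair a b hab k l).integrable_mul (hint1 _ _ _) (hint1 _ _ _)
  have hmul_eq : ∀ (a b : Σ i : Fin q, Fin (N i)), a ≠ b → ∀ (k l : Fin p),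
      ∫ ω, x a.1 a.2 ω k * x b.1 b.2 ω l = μv a.1 k * μv b.1 l := by
    intro a b hab k l
    have := ProbabilityTheory.IndepFun.integral_fun_mul_eq_mul_integral (hpair a b hab k l)
      (hint1 _ _ _).aestronglyMeasurable (hint1 _ _ _).aestronglyMeasurable
    simpa [hmean] using this
  -- expansion of the dot product
  have hdot : ∀ (a b : Σ i : Fin q, Fin (N i)) (ω : Ω),
      x a.1 a.2 ω ⬝ᵥ W.mulVec (x b.1 b.2 ω)
        = ∑ k, ∑ l, W k l * (x a.1 a.2 ω k * x b.1 b.2 ω l) := by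
    intro a b ω
    simp only [dotProduct, mulVec, Finset.mul_sum]
    exact Finset.sum_congr rfl fun k _ => Finset.sum_congr rfl fun l _ => by ring
  have hdot_int : ∀ (a b : Σ i : Fin q, Fin (N i)), a ≠ b →
      Integrable (fun ω => x a.1 a.2 ω ⬝ᵥ W.mulVec (x b.1 b.2 ω)) ℙ := by
    intro a b hab
    simp only [hdot]
    exact integrable_finset_sum _ fun k _ => integrable_finset_sum _ fun l _ =>
      (hmul_int a b hab k l).const_mul _
  have hdot_eq : ∀ (a b : Σ i : Fin q, Fin (N i)), a ≠ b →
      ∫ ω, x a.1 a.2 ω ⬝ᵥ W.mulVec (x b.1 b.2 ω) = μv a.1 ⬝ᵥ W.mulVec (μv b.1) := by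
    intro a b hab
    simp only [hdot]
    rw [integral_finset_sum _
      (f := fun k ω => ∑ l, W k l * (x a.1 a.2 ω k * x b.1 b.2 ω l))
      (fun k _ => integrable_finset_sum _ fun l _ =>
      (hmul_int a b hab k l).const_mul _)]
    have hk : ∀ k : Fin p, ∫ ω, ∑ l, W k l * (x a.1 a.2 ω k * x b.1 b.2 ω l)
        = ∑ l, W k l * (μv a.1 k * μv b.1 l) := by
      intro k
      rw [integral_finset_sum _ (fun l _ => (hmul_int a b hab k l).const_mul _)]
      exact Finset.sum_congr rfl fun l _ => by
        rw [MeasureTheory.integral_const_mul, hmul_eq a b hab k l]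
    rw [Finset.sum_congr rfl fun k _ => hk k]
    simp only [dotProduct, mulVec, Finset.mul_sum]
    exact Finset.sum_congr rfl fun k _ => Finset.sum_congr rfl fun l _ => by ring
  -- sigma-type ne facts
  have hne1 : ∀ {i1 i2 : Fin q}, i1 ≠ i2 → ∀ (j1 : Fin (N i1)) (j2 : Fin (N i2)),
      (⟨i1, j1⟩ : Σ i : Fin q, Fin (N i)) ≠ ⟨i2, j2⟩ := by
    intro i1 i2 h j1 j2 hc
    exact h (congrArg Sigma.fst hc)
  have hne2 : ∀ {i : Fin q} {j1 j2 : Fin (N i)}, j1 ≠ j2 →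
      (⟨i, j1⟩ : Σ i : Fin q, Fin (N i)) ≠ ⟨i, j2⟩ := by
    intro i j1 j2 h hc
    exact h (by simpa using hc)
  -- T1 summand integrability
  have hT1sum_int : ∀ i1 i2 : Fin q, Integrable (fun ω => if i1 ≠ i2 then
      β i1 * β i2 / ((N i1 : ℝ) * (N i2 : ℝ)) *
        ∑ j1, ∑ j2, x i1 j1 ω ⬝ᵥ W.mulVec (x i2 j2 ω) else 0) ℙ := by
    intro i1 i2
    by_cases h : i1 ≠ i2
    · simp only [if_pos h]
      exact (integrable_finset_sum _ fun j1 _ => integrable_finset_sum _ fun j2 _ =>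
        hdot_int ⟨i1, j1⟩ ⟨i2, j2⟩ (hne1 h j1 j2)).const_mul _
    · simp only [if_neg h]
      exact integrable_const 0
  -- T2 summand integrability
  have hT2sum_int : ∀ i : Fin q, Integrable (fun ω =>
      β i ^ 2 / ((N i : ℝ) * ((N i : ℝ) - 1)) *
        ∑ j1, ∑ j2, if j1 ≠ j2 then x i j1 ω ⬝ᵥ W.mulVec (x i j2 ω) else 0) ℙ := by
    intro i
    refine Integrable.const_mul ?_ _
    refine integrable_finset_sum _ fun j1 _ => integrable_finset_sum _ fun j2 _ => ?_
    by_cases h : j1 ≠ j2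
    · simp only [if_pos h]
      exact hdot_int ⟨i, j1⟩ ⟨i, j2⟩ (hne2 h)
    · simp only [if_neg h]
      exact integrable_const 0
  -- integral of T1
  have hI1 : ∫ ω, T1 ω = ∑ i1, ∑ i2, if i1 ≠ i2 then
      β i1 * β i2 * (μv i1 ⬝ᵥ W.mulVec (μv i2)) else 0 := by
    simp only [hT1]
    rw [integral_finset_sum _ (fun i1 _ => integrable_finset_sum _ fun i2 _ => hT1sum_int i1 i2)]
    refine Finset.sum_congr rfl fun i1 _ => ?_
    rw [integral_finset_sum _ (fun i2 _ => hT1sum_int i1 i2)]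
    refine Finset.sum_congr rfl fun i2 _ => ?_
    by_cases h : i1 ≠ i2
    · simp only [if_pos h]
      rw [MeasureTheory.integral_const_mul]
      rw [integral_finset_sum _ (fun j1 _ => integrable_finset_sum _ fun j2 _ =>
        hdot_int ⟨i1, j1⟩ ⟨i2, j2⟩ (hne1 h j1 j2))]
      rw [Finset.sum_congr rfl fun j1 _ => integral_finset_sum _
        (fun j2 _ => hdot_int ⟨i1, j1⟩ ⟨i2, j2⟩ (hne1 h j1 j2))]
      rw [Finset.sum_congr rfl fun j1 _ => Finset.sum_congr rfl fun j2 _ =>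
        hdot_eq ⟨i1, j1⟩ ⟨i2, j2⟩ (hne1 h j1 j2)]
      simp only [Finset.sum_const, Finset.card_univ, Fintype.card_fin, nsmul_eq_mul]
      field_simp [hN0 i1, hN0 i2]
    · simp only [if_neg h, integral_const]
      simp
  -- constant double sum with off-diagonal indicator
  have hcount : ∀ (n : ℕ) (c : ℝ), ∑ j1 : Fin n, ∑ j2 : Fin n, (if j1 ≠ j2 then c else 0)
      = (n : ℝ) * ((n : ℝ) - 1) * c := by
    intro n c
    have h1 : ∀ j1 : Fin n, ∑ j2 : Fin n, (if j1 ≠ j2 then c else 0) = (n : ℝ) * c - c := by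
      intro j1
      rw [Finset.sum_congr rfl (fun j2 _ => show (if j1 ≠ j2 then c else 0)
          = c - (if j1 = j2 then c else 0) by by_cases h : j1 = j2 <;> simp [h]),
        Finset.sum_sub_distrib, Finset.sum_ite_eq]
      simp [Finset.card_univ, mul_comm]
    rw [Finset.sum_congr rfl (fun j1 _ => h1 j1)]
    simp [Finset.card_univ]
    ring
  -- integral of T2
  have hI2 : ∫ ω, T2 ω = ∑ i, β i ^ 2 * (μv i ⬝ᵥ W.mulVec (μv i)) := by
    simp only [hT2]
    rw [integral_finset_sum _ (fun i _ => hT2sum_int i)]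
    refine Finset.sum_congr rfl fun i _ => ?_
    rw [MeasureTheory.integral_const_mul]
    have hsum_int : ∀ (j1 j2 : Fin (N i)), Integrable (fun ω =>
        if j1 ≠ j2 then x i j1 ω ⬝ᵥ W.mulVec (x i j2 ω) else 0) ℙ := by
      intro j1 j2
      by_cases h : j1 ≠ j2
      · simp only [if_pos h]; exact hdot_int ⟨i, j1⟩ ⟨i, j2⟩ (hne2 h)
      · simp only [if_neg h]; exact integrable_const 0
    rw [integral_finset_sum _ (fun j1 _ => integrable_finset_sum _ fun j2 _ => hsum_int j1 j2)]
    rw [Finset.sum_congr rfl fun j1 _ => integral_finset_sum _ (fun j2 _ => hsum_int j1 j2)]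
    have hval : ∀ (j1 j2 : Fin (N i)),
        ∫ ω, (if j1 ≠ j2 then x i j1 ω ⬝ᵥ W.mulVec (x i j2 ω) else 0)
          = if j1 ≠ j2 then μv i ⬝ᵥ W.mulVec (μv i) else 0 := by
      intro j1 j2
      by_cases h : j1 ≠ j2
      · simp only [if_pos h]; exact hdot_eq ⟨i, j1⟩ ⟨i, j2⟩ (hne2 h)
      · simp only [if_neg h]; simp
    rw [Finset.sum_congr rfl fun j1 _ => Finset.sum_congr rfl fun j2 _ => hval j1 j2]
    rw [hcount]
    field_simp [hN0 i, hN1 i]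
  -- integrability of T1 and T2, and splitting off the integral of T
  have hT1_int : Integrable T1 ℙ := by
    have : T1 = fun ω => ∑ i1, ∑ i2, if i1 ≠ i2 then
        β i1 * β i2 / ((N i1 : ℝ) * (N i2 : ℝ)) *
          ∑ j1, ∑ j2, x i1 j1 ω ⬝ᵥ W.mulVec (x i2 j2 ω) else 0 := funext hT1
    rw [this]
    exact integrable_finset_sum _ fun i1 _ => integrable_finset_sum _ fun i2 _ => hT1sum_int i1 i2
  have hT2_int : Integrable T2 ℙ := by
    have : T2 = fun ω => ∑ i, β i ^ 2 / ((N i : ℝ) * ((N i : ℝ) - 1)) *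
        ∑ j1, ∑ j2, if j1 ≠ j2 then x i j1 ω ⬝ᵥ W.mulVec (x i j2 ω) else 0 := funext hT2
    rw [this]
    exact integrable_finset_sum _ fun i _ => hT2sum_int i
  have hTsplit : ∫ ω, T ω = (∫ ω, T1 ω) + ∫ ω, T2 ω := by
    simp only [hT]
    exact integral_add hT1_int hT2_int
  -- bilinearity of the target quadratic form
  have hRHS : (∑ i, β i • μv i) ⬝ᵥ W.mulVec (∑ i, β i • μv i)
      = ∑ i1, ∑ i2, β i1 * β i2 * (μv i1 ⬝ᵥ W.mulVec (μv i2)) := by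
    have h2 : W.mulVec (∑ i, β i • μv i) = ∑ i, β i • W.mulVec (μv i) := by
      rw [← Matrix.mulVecLin_apply, map_sum]
      simp [Matrix.mulVec_smul]
    have hs1 : ∀ (v : Fin p → ℝ) (f : Fin q → Fin p → ℝ),
        (∑ i, f i) ⬝ᵥ v = ∑ i, f i ⬝ᵥ v := by
      intro v f
      simp only [dotProduct, Finset.sum_apply, Finset.sum_mul]
      exact Finset.sum_comm
    have hs2 : ∀ (v : Fin p → ℝ) (f : Fin q → Fin p → ℝ),
        v ⬝ᵥ (∑ i, f i) = ∑ i, v ⬝ᵥ f i := by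
      intro v f
      simp only [dotProduct, Finset.sum_apply, Finset.mul_sum]
      exact Finset.sum_comm
    rw [h2, hs1]
    refine Finset.sum_congr rfl fun i1 _ => ?_
    rw [hs2]
    refine Finset.sum_congr rfl fun i2 _ => ?_
    rw [smul_dotProduct, dotProduct_smul]
    simp only [smul_eq_mul]; ring
  -- combine
  rw [hTsplit, hI1, hI2, hRHS]
  have hsplit : ∀ i1 : Fin q, ∑ i2, β i1 * β i2 * (μv i1 ⬝ᵥ W.mulVec (μv i2))
      = (∑ i2, if i1 ≠ i2 then β i1 * β i2 * (μv i1 ⬝ᵥ W.mulVec (μv i2)) else 0)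
        + β i1 ^ 2 * (μv i1 ⬝ᵥ W.mulVec (μv i1)) := by
    intro i1
    rw [Finset.sum_congr rfl (fun i2 _ => show β i1 * β i2 * (μv i1 ⬝ᵥ W.mulVec (μv i2))
        = (if i1 ≠ i2 then β i1 * β i2 * (μv i1 ⬝ᵥ W.mulVec (μv i2)) else 0)
          + (if i1 = i2 then β i1 * β i2 * (μv i1 ⬝ᵥ W.mulVec (μv i2)) else 0) from by
        by_cases h : i1 = i2 <;> simp [h]),
      Finset.sum_add_distrib, Finset.sum_ite_eq]
    simp only [Finset.mem_univ, if_true]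
    congr 1
    ring
  rw [Finset.sum_congr rfl fun i1 _ => hsplit i1, Finset.sum_add_distrib]
end

section
/- Let W = Ω + α² 1_p 1_pᵀ with Ω = diag(ω_1²,…,ω_p²), 0 < ω_1 ≤ … ≤ ω_p, and α ∈ ℝ. Let Σ be a nonzero p×p real symmetric positive semidefinite matrix with largest eigenvalue λ_p*, let μ ∈ ℝ^p be the vector whose first d coordinates equal ν and whose remaining p−d coordinates equal 0 (1 ≤ d ≤ p, ν ∈ ℝ), and let D = sqrt( Σ_{i1≠i2} β_{i1}² β_{i2}²/(n_{i1} n_{i2}) + Σ_{i=1}^q β_i⁴/(n_i(n_i−1)) ) > 0 for real scalars β_1,…,β_q and integers n_i ≥ 2. Then μᵀWμ / ( sqrt(2 tr((WΣ)²)) · D ) ≥ ( α² d² ν² + ν² Σ_{i=1}^d ω_i² ) / ( sqrt( 2 λ_p*² ( Σ_{i=2}^p ω_i⁴ + ω_p⁴ + 2p ω_p² α² + p² α⁴ ) ) · D ). -/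
open Matrix
open scoped BigOperators

private lemma aux_tr_pos {n : Type*} [Fintype n] (M : Matrix n n ℝ) (hM : M ≠ 0) :
    0 < (Mᴴ * M).trace := by
  simp only [Matrix.trace, Matrix.diag, Matrix.mul_apply, Matrix.conjTranspose_apply, star_trivial]
  obtain ⟨i, j, hij⟩ : ∃ i j, M i j ≠ 0 := by
    by_contra h; push_neg at h; exact hM (Matrix.ext fun i j => h i j)
  calc (0:ℝ) < M i j * M i j := mul_self_pos.mpr hij
    _ ≤ ∑ k, M k j * M k j :=
        Finset.single_le_sum (f := fun k => M k j * M k j) (fun k _ => mul_self_nonneg _)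
          (Finset.mem_univ i)
    _ ≤ ∑ l, ∑ k, M k l * M k l := Finset.single_le_sum (f := fun l => ∑ k, M k l * M k l)
        (fun l _ => Finset.sum_nonneg fun k _ => mul_self_nonneg _) (Finset.mem_univ j)

open scoped MatrixOrder Matrix.Norms.L2Operator in
private lemma aux_sqrt {n : Type*} [Fintype n] [DecidableEq n] {S : Matrix n n ℝ}
    (hS : S.PosSemidef) : ∃ R : Matrix n n ℝ, R.PosSemidef ∧ R * R = S :=
  ⟨CFC.sqrt S, (CFC.sqrt_nonneg S).posSemidef, CFC.sqrt_mul_sqrt_self S hS.nonneg⟩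

private lemma aux_tr_mul_nonneg {n : Type*} [Fintype n] [DecidableEq n] {A B : Matrix n n ℝ}
    (hA : A.PosSemidef) (hB : B.PosSemidef) : 0 ≤ (A * B).trace := by
  obtain ⟨P, hP, hPP⟩ := aux_sqrt hA
  obtain ⟨Q, hQ, hQQ⟩ := aux_sqrt hB
  have eA : A = Pᴴ * P := by rw [hP.1.eq, hPP]
  have eB : B = Qᴴ * Q := by rw [hQ.1.eq, hQQ]
  subst eA eB
  have h : (Pᴴ * P) * (Qᴴ * Q) = Pᴴ * ((P * Qᴴ) * Q) := by noncomm_ring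
  rw [h, Matrix.trace_mul_comm]
  have h2 : (P * Qᴴ) * Q * Pᴴ = (Q * Pᴴ)ᴴ * (Q * Pᴴ) := by
    simp [Matrix.conjTranspose_mul]; noncomm_ring
  rw [h2]
  simp only [Matrix.trace, Matrix.diag, Matrix.mul_apply, Matrix.conjTranspose_apply, star_trivial]
  exact Finset.sum_nonneg fun i _ => Finset.sum_nonneg fun j _ => mul_self_nonneg _

private lemma aux_loewner {n : Type*} [Fintype n] [DecidableEq n] {S : Matrix n n ℝ}
    (hS : S.PosSemidef) (lam : ℝ) (h : ∀ i, hS.1.eigenvalues i ≤ lam) :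
    (lam • (1 : Matrix n n ℝ) - S).PosSemidef := by
  have hH := hS.1
  set U := (hH.eigenvectorUnitary : Matrix n n ℝ) with hU
  have hUU : U * star U = 1 := Matrix.mem_unitaryGroup_iff.mp hH.eigenvectorUnitary.2
  have key : lam • (1 : Matrix n n ℝ) - S
      = U * Matrix.diagonal (fun i => lam - hH.eigenvalues i) * Uᴴ := by
    have hspec := hH.spectral_theorem
    simp only [Unitary.conjStarAlgAut_apply, Unitary.coe_star] at hspec
    rw [Matrix.star_eq_conjTranspose, ← hU] at hspec
    have hd : Matrix.diagonal (fun i => lam - hH.eigenvalues i)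
        = lam • (1 : Matrix n n ℝ) - Matrix.diagonal (RCLike.ofReal ∘ hH.eigenvalues) := by
      ext i j
      by_cases hij : i = j <;> simp [hij, Matrix.diagonal_apply, Matrix.one_apply]
    rw [hd, Matrix.mul_sub, Matrix.sub_mul, ← hspec]
    congr 1
    rw [Matrix.mul_smul, Matrix.mul_one, Matrix.smul_mul]
    rw [show Uᴴ = star U from rfl, hUU]
  rw [key]
  exact (Matrix.posSemidef_diagonal_iff.mpr
    (by intro i; simpa using h i)).mul_mul_conjTranspose_same U

private lemma aux_keytr {n : Type*} [Fintype n] [DecidableEq n] {A S : Matrix n n ℝ} {lam : ℝ}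
    (hA : A.PosSemidef) (hT : (lam • (1 : Matrix n n ℝ) - S).PosSemidef) :
    (A * S).trace ≤ lam * A.trace := by
  have h3 := aux_tr_mul_nonneg hA hT
  rw [Matrix.mul_sub, Matrix.trace_sub, Matrix.mul_smul, Matrix.mul_one, Matrix.trace_smul] at h3
  simp only [smul_eq_mul] at h3; linarith

private lemma aux_quad (p : ℕ) (ω : Fin p → ℝ) (α : ℝ) (W : Matrix (Fin p) (Fin p) ℝ)
    (hWdef : W = Matrix.diagonal (fun i => ω i ^ 2)
        + α ^ 2 • Matrix.vecMulVec (fun _ : Fin p => (1 : ℝ)) (fun _ => 1))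
    (x y : Fin p → ℝ) :
    x ⬝ᵥ W.mulVec y = (∑ i, ω i ^ 2 * x i * y i) + α ^ 2 * (∑ i, x i) * (∑ i, y i) := by
  subst hWdef
  simp only [dotProduct, Matrix.mulVec, dotProduct, Matrix.add_apply,
    Matrix.smul_apply, Matrix.vecMulVec_apply, smul_eq_mul, mul_one, one_mul]
  have inner : ∀ i, (∑ j, (Matrix.diagonal (fun k => ω k ^ 2) i j + α^2) * y j)
      = ω i ^ 2 * y i + α ^ 2 * ∑ j, y j := by
    intro i
    simp only [add_mul, Finset.sum_add_distrib]
    congr 1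
    · simp [Matrix.diagonal_apply, ite_mul]
    · rw [Finset.mul_sum]
  simp only [inner, mul_add, Finset.sum_add_distrib]
  congr 1
  · apply Finset.sum_congr rfl; intros; ring
  · rw [← Finset.sum_mul]; ring

private lemma aux_trW2 (p : ℕ) (ω : Fin p → ℝ) (α : ℝ) (W : Matrix (Fin p) (Fin p) ℝ)
    (hWdef : W = Matrix.diagonal (fun i => ω i ^ 2)
        + α ^ 2 • Matrix.vecMulVec (fun _ : Fin p => (1 : ℝ)) (fun _ => 1)) :
    (W * W).trace = (∑ i, ω i ^ 4) + 2 * α^2 * (∑ i, ω i ^2) + (p:ℝ)^2 * α^4 := by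
  subst hWdef
  simp only [Matrix.trace, Matrix.diag, Matrix.mul_apply, Matrix.add_apply, Matrix.smul_apply,
    Matrix.vecMulVec_apply, smul_eq_mul, mul_one]
  have inner : ∀ i : Fin p, (∑ j, (Matrix.diagonal (fun k => ω k ^ 2) i j + α^2)
        * (Matrix.diagonal (fun k => ω k ^ 2) j i + α^2))
      = ω i ^ 4 + 2 * α^2 * ω i ^2 + (p:ℝ) * α^4 := by
    intro i
    have : ∀ j, (Matrix.diagonal (fun k => ω k ^ 2) i j + α^2)
        * (Matrix.diagonal (fun k => ω k ^ 2) j i + α^2)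
        = (if i = j then ω i ^ 4 + 2*α^2*ω i ^2 else 0) + α^4 := by
      intro j
      by_cases h : i = j
      · subst h; simp [Matrix.diagonal_apply]; ring
      · simp [Matrix.diagonal_apply, h, Ne.symm h]; ring
    simp only [this, Finset.sum_add_distrib, Finset.sum_ite_eq, Finset.mem_univ, if_pos,
      Finset.sum_const, Finset.card_univ, Fintype.card_fin, nsmul_eq_mul]
  simp only [inner, Finset.sum_add_distrib, Finset.sum_const, Finset.card_univ, Fintype.card_fin,
    nsmul_eq_mul, Finset.mul_sum]
  ring

private lemma aux_sum_ind (p d : ℕ) (hdp : d ≤ p) (ν : ℝ) :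
    ∑ i : Fin p, (if i.val < d then ν else 0) = d * ν := by
  rw [Finset.sum_ite, Finset.sum_const, Finset.sum_const]
  simp only [smul_eq_mul, mul_zero, add_zero, nsmul_eq_mul]
  congr 1
  norm_cast
  rw [show (Finset.univ.filter fun i : Fin p => i.val < d)
      = Finset.map (Fin.castLEEmb hdp) Finset.univ from ?_]
  · simp
  · ext i
    simp only [Finset.mem_filter, Finset.mem_univ, true_and, Finset.mem_map, Fin.castLEEmb]
    constructor
    · intro h; exact ⟨⟨i.val, h⟩, by simp [Fin.castLE, Fin.ext_iff]⟩
    · rintro ⟨a, rfl⟩; simpa using a.isLt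

set_option maxHeartbeats 1000000 in
/-- lower bound for the signal-to-noise ratio under weakly dense signals:
with `W = Ω + α² 1ₚ1ₚᵀ`, `Σ` a nonzero PSD matrix with largest eigenvalue `λ_p*`, `μ` having
its first `d` coordinates equal to `ν` and the rest `0`, and `D` the sample-size factor,
`μᵀWμ / (√(2 tr((WΣ)²)) D) ≥ (α²d²ν² + ν² Σ_{i≤d} ωᵢ²) /
 (√(2 λ_p*² (Σ_{i=2}^p ωᵢ⁴ + ω_p⁴ + 2pω_p²α² + p²α⁴)) D)`. -/
theorem stmt_9 (p q : ℕ) (hp : 1 ≤ p) (hq : 2 ≤ q)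
    (ω : Fin p → ℝ) (hpos : ∀ i, 0 < ω i) (hmono : Monotone ω)
    (α : ℝ)
    (W : Matrix (Fin p) (Fin p) ℝ)
    (hWdef : W = Matrix.diagonal (fun i => ω i ^ 2)
        + α ^ 2 • Matrix.vecMulVec (fun _ : Fin p => (1 : ℝ)) (fun _ => 1))
    (S : Matrix (Fin p) (Fin p) ℝ) (hS : S.PosSemidef) (hSne : S ≠ 0)
    (lam : ℝ) (hlam : lam = ⨆ i, hS.1.eigenvalues i)
    (ν : ℝ) (d : ℕ) (hd1 : 1 ≤ d) (hdp : d ≤ p)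
    (μ : Fin p → ℝ) (hμ : ∀ i : Fin p, μ i = if i.val < d then ν else 0)
    (β : Fin q → ℝ) (N : Fin q → ℕ) (hN : ∀ i, 2 ≤ N i)
    (D : ℝ)
    (hD : D = Real.sqrt ((∑ i1, ∑ i2, if i1 ≠ i2 then
          β i1 ^ 2 * β i2 ^ 2 / ((N i1 : ℝ) * (N i2 : ℝ)) else 0)
        + ∑ i, β i ^ 4 / ((N i : ℝ) * ((N i : ℝ) - 1))))
    (hDpos : 0 < D) :
    (α ^ 2 * (d : ℝ) ^ 2 * ν ^ 2 + ν ^ 2 * ∑ i : Fin p, (if i.val < d then ω i ^ 2 else 0))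
        / (Real.sqrt (2 * lam ^ 2 *
            ((∑ i : Fin p, if 1 ≤ i.val then ω i ^ 4 else 0)
              + ω ⟨p - 1, by omega⟩ ^ 4 + 2 * (p : ℝ) * ω ⟨p - 1, by omega⟩ ^ 2 * α ^ 2
              + (p : ℝ) ^ 2 * α ^ 4)) * D)
      ≤ (μ ⬝ᵥ W.mulVec μ) / (Real.sqrt (2 * ((W * S) * (W * S)).trace) * D) := by
  have hμeq : (fun i => μ i) = fun i : Fin p => if i.val < d then ν else 0 := funext hμ
  have hμ' : μ = fun i : Fin p => if i.val < d then ν else 0 := funext hμ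
  set ωq : ℝ := ω ⟨p - 1, by omega⟩ with hωq
  -- ω i ≤ ωq
  have hωle : ∀ i : Fin p, ω i ≤ ωq := fun i => hmono (by simp [Fin.le_def]; omega)
  -- numerator equality
  have hnum : μ ⬝ᵥ W.mulVec μ
      = α ^ 2 * (d : ℝ) ^ 2 * ν ^ 2 + ν ^ 2 * ∑ i : Fin p, (if i.val < d then ω i ^ 2 else 0) := by
    rw [aux_quad p ω α W hWdef μ μ]
    have h1 : ∑ i : Fin p, ω i ^ 2 * μ i * μ i
        = ν ^ 2 * ∑ i : Fin p, (if i.val < d then ω i ^ 2 else 0) := by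
      rw [Finset.mul_sum]
      apply Finset.sum_congr rfl
      intro i _
      rw [hμ i]
      by_cases h : i.val < d <;> simp [h] <;> ring
    have h2 : ∑ i, μ i = (d : ℝ) * ν := by
      rw [hμ']; exact aux_sum_ind p d hdp ν
    rw [h1, h2]; ring
  rw [hnum]
  -- W is positive definite
  have hWherm : W.IsHermitian := by
    rw [hWdef]
    apply Matrix.IsHermitian.add
    · exact Matrix.isHermitian_diagonal_iff.mpr fun i => IsSelfAdjoint.all _
    · unfold Matrix.IsHermitian
      ext i j
      simp [Matrix.vecMulVec_apply, Matrix.conjTranspose_apply]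
  have hWpd : W.PosDef := by
    refine Matrix.PosDef.of_dotProduct_mulVec_pos hWherm fun x hx => ?_
    have := aux_quad p ω α W hWdef x x
    simp only [star_trivial]
    rw [this]
    have h1 : 0 < ∑ i, ω i ^ 2 * x i * x i := by
      obtain ⟨i0, hi0⟩ : ∃ i, x i ≠ 0 := Function.ne_iff.mp hx
      apply Finset.sum_pos' (fun i _ => by
        have := mul_nonneg (sq_nonneg (ω i)) (mul_self_nonneg (x i)); nlinarith)
      exact ⟨i0, Finset.mem_univ _, by
        have := mul_pos (pow_pos (hpos i0) 2) (mul_self_pos.mpr hi0); nlinarith⟩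
    nlinarith [sq_nonneg (∑ i, x i), sq_nonneg α]
  -- lam bounds
  have hbdd : BddAbove (Set.range hS.1.eigenvalues) := Set.Finite.bddAbove (Set.finite_range _)
  have hevle : ∀ i, hS.1.eigenvalues i ≤ lam := fun i => hlam ▸ le_ciSup hbdd i
  have hlam0 : 0 ≤ lam := le_trans (hS.eigenvalues_nonneg ⟨0, by omega⟩) (hevle ⟨0, by omega⟩)
  have hT : (lam • (1 : Matrix (Fin p) (Fin p) ℝ) - S).PosSemidef := aux_loewner hS lam hevle
  -- trace bound
  have hWSW : (W * S * W).PosSemidef := by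
    have := hS.mul_mul_conjTranspose_same W
    rwa [hWherm.eq] at this
  have hWW : (W * W).PosSemidef := by
    have := Matrix.posSemidef_conjTranspose_mul_self W
    rwa [hWherm.eq] at this
  have htr1 : ((W * S) * (W * S)).trace ≤ lam * (W * S * W).trace := by
    have h : (W * S) * (W * S) = (W * S * W) * S := by noncomm_ring
    rw [h]
    exact aux_keytr hWSW hT
  have htr2 : (W * S * W).trace = ((W * W) * S).trace := by
    rw [Matrix.trace_mul_comm]; congr 1; noncomm_ring
  have htr3 : ((W * W) * S).trace ≤ lam * (W * W).trace := aux_keytr hWW hT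
  have htrW2 : (W * W).trace ≤ (∑ i : Fin p, if 1 ≤ i.val then ω i ^ 4 else 0)
      + ωq ^ 4 + 2 * (p : ℝ) * ωq ^ 2 * α ^ 2 + (p : ℝ) ^ 2 * α ^ 4 := by
    rw [aux_trW2 p ω α W hWdef]
    have e1 : (∑ i : Fin p, ω i ^ 4)
        ≤ (∑ i : Fin p, if 1 ≤ i.val then ω i ^ 4 else 0) + ωq ^ 4 := by
      have : (∑ i : Fin p, ω i ^ 4)
          ≤ ∑ i : Fin p, ((if 1 ≤ i.val then ω i ^ 4 else 0)
            + (if i.val = 0 then ωq ^ 4 else 0)) := by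
        apply Finset.sum_le_sum
        intro i _
        by_cases h : 1 ≤ i.val
        · have h0 : ¬ i.val = 0 := by omega
          simp [h, h0]
        · have h0 : i.val = 0 := by omega
          simp [h, h0]
          exact pow_le_pow_left₀ (hpos i).le (hωle i) 4
      refine this.trans ?_
      rw [Finset.sum_add_distrib]
      gcongr
      · rw [show (fun i : Fin p => if i.val = 0 then ωq ^ 4 else 0)
            = fun i : Fin p => if i = ⟨0, by omega⟩ then ωq ^ 4 else 0 from
          funext fun i => by simp [Fin.ext_iff]]
        rw [Finset.sum_ite_eq' Finset.univ (⟨0, by omega⟩ : Fin p) (fun _ => ωq ^ 4)]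
        simp
    have e2 : (∑ i : Fin p, ω i ^ 2) ≤ (p : ℝ) * ωq ^ 2 := by
      calc (∑ i : Fin p, ω i ^ 2) ≤ ∑ _i : Fin p, ωq ^ 2 :=
            Finset.sum_le_sum fun i _ => pow_le_pow_left₀ (hpos i).le (hωle i) 2
        _ = (p : ℝ) * ωq ^ 2 := by simp [Finset.sum_const, Fintype.card_fin]
      --
    nlinarith [sq_nonneg α]
  -- trace positivity
  have htrpos : 0 < ((W * S) * (W * S)).trace := by
    obtain ⟨R, hRpsd, hRR⟩ := aux_sqrt hS
    have hRsymm : Rᵀ = R := by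
      rw [← Matrix.conjTranspose_eq_transpose_of_trivial]; exact hRpsd.1
    have hRherm : Rᴴ = R := by
      rw [Matrix.conjTranspose_eq_transpose_of_trivial]; exact hRsymm
    set M := R * W * R with hM
    have hMherm : Mᴴ = M := by
      rw [hM]
      simp only [Matrix.conjTranspose_mul, hRherm, hWherm.eq]
      noncomm_ring
    have hvm : ∀ x : Fin p → ℝ, x ᵥ* R = R *ᵥ x := by
      intro x
      rw [← Matrix.transpose_transpose R, Matrix.vecMul_transpose, Matrix.transpose_transpose,
        hRsymm]
    have hMne : M ≠ 0 := by
      intro h0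
      have hRx : ∀ x : Fin p → ℝ, R.mulVec x = 0 := by
        intro x
        by_contra hne
        have hpos' := hWpd.dotProduct_mulVec_pos hne
        simp only [star_trivial] at hpos'
        have hdot : x ⬝ᵥ M *ᵥ x = (R *ᵥ x) ⬝ᵥ W *ᵥ (R *ᵥ x) := by
          rw [hM, ← Matrix.mulVec_mulVec, ← Matrix.mulVec_mulVec, Matrix.dotProduct_mulVec,
            hvm]
        rw [← hdot, h0] at hpos'
        simp at hpos'
      have hR0 : R = 0 := by
        ext i j
        have := congrFun (hRx (Pi.single j 1)) i
        simpa [Matrix.mulVec_single] using this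
      exact hSne (by rw [← hRR, hR0, Matrix.zero_mul])
    have heq : ((W * S) * (W * S)).trace = (Mᴴ * M).trace := by
      rw [hMherm, hM, ← hRR]
      rw [show (W * (R * R)) * (W * (R * R)) = (W * R) * ((R * W * R) * R) from by noncomm_ring]
      rw [Matrix.trace_mul_comm]
      congr 1
      noncomm_ring
    rw [heq]
    exact aux_tr_pos M hMne
  -- assemble
  have hnum_nonneg : 0 ≤ α ^ 2 * (d : ℝ) ^ 2 * ν ^ 2
      + ν ^ 2 * ∑ i : Fin p, (if i.val < d then ω i ^ 2 else 0) := by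
    apply add_nonneg (by positivity)
    apply mul_nonneg (sq_nonneg _)
    exact Finset.sum_nonneg fun i _ => by positivity
  have hchain : 2 * ((W * S) * (W * S)).trace
      ≤ 2 * lam ^ 2 * ((∑ i : Fin p, if 1 ≤ i.val then ω i ^ 4 else 0)
        + ωq ^ 4 + 2 * (p : ℝ) * ωq ^ 2 * α ^ 2 + (p : ℝ) ^ 2 * α ^ 4) := by
    have h4 : ((W * S) * (W * S)).trace ≤ lam * (lam * (W * W).trace) := by
      refine htr1.trans ?_
      rw [htr2]
      exact mul_le_mul_of_nonneg_left htr3 hlam0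
    have h5 : lam * (lam * (W * W).trace) ≤ lam ^ 2 * ((∑ i : Fin p, if 1 ≤ i.val then ω i ^ 4 else 0)
        + ωq ^ 4 + 2 * (p : ℝ) * ωq ^ 2 * α ^ 2 + (p : ℝ) ^ 2 * α ^ 4) := by
      rw [← mul_assoc, ← sq]
      exact mul_le_mul_of_nonneg_left htrW2 (sq_nonneg lam)
    nlinarith
  have hs2pos : 0 < Real.sqrt (2 * ((W * S) * (W * S)).trace) * D :=
    mul_pos (Real.sqrt_pos.mpr (by linarith)) hDpos
  apply div_le_div_of_nonneg_left hnum_nonneg hs2pos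
  exact mul_le_mul_of_nonneg_right (Real.sqrt_le_sqrt hchain) hDpos.le
end
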